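/- Let p be a prime and define a_p(n) = ⌊n/(p−1)⌋ + v_p(⌊n/(p−1)⌋!). Then for all natural numbers m and n with n ≥ 1, one has a_p(m + n) ≥ a_p(m + 1) + v_p(n!). -/

import Mathlib

/-- `a p n = ⌊n/(p−1)⌋ + v_p(⌊n/(p−1)⌋!)`, where `⌊·⌋` is natural division. -/
def apFun (p n : ℕ) : ℕ :=
  n / (p - 1) + padicValNat p (Nat.factorial (n / (p - 1)))

lemma padicValNat_le_of_dvd (p : ℕ) [Fact p.Prime] {a b : ℕ} (hb : b ≠ 0) (h : a ∣ b) :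
    padicValNat p a ≤ padicValNat p b := by
  rcases eq_or_ne a 0 with rfl | ha
  · exact absurd (zero_dvd_iff.mp h) hb
  · rw [← padicValNat_dvd_iff_le hb]
    exact dvd_trans (pow_padicValNat_dvd) h

lemma padicValNat_factorial_mono (p : ℕ) [Fact p.Prime] {a b : ℕ} (h : a ≤ b) :
    padicValNat p (Nat.factorial a) ≤ padicValNat p (Nat.factorial b) :=
  padicValNat_le_of_dvd p (Nat.factorial_ne_zero b) (Nat.factorial_dvd_factorial h)

lemma padicValNat_factorial_le' (p : ℕ) [Fact p.Prime] (n : ℕ) (hn : 1 ≤ n) :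
    padicValNat p (Nat.factorial n) ≤ (n - 1) / (p - 1) := by
  have hp := (Fact.out : p.Prime)
  have h2 : 2 ≤ p := hp.two_le
  rw [Nat.le_div_iff_mul_le (by omega), mul_comm, sub_one_mul_padicValNat_factorial]
  have hds : 1 ≤ (p.digits n).sum := by
    have hne : p.digits n ≠ [] := Nat.digits_ne_nil_iff_ne_zero.mpr (by omega)
    have hlast : (p.digits n).getLast hne ≠ 0 :=
      Nat.getLast_digit_ne_zero p (by omega)
    have hmem := List.getLast_mem hne
    have := List.single_le_sum (fun x _ => Nat.zero_le x) _ hmem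
    omega
  omega

theorem apFun_add_ge (p : ℕ) (hp : p.Prime) (m n : ℕ) (hn : n ≥ 1) :
    apFun p (m + n) ≥ apFun p (m + 1) + padicValNat p (Nat.factorial n) := by
  haveI : Fact p.Prime := ⟨hp⟩
  set q := p - 1 with hq
  set j := (m + 1) / q with hj
  set d := (n - 1) / q with hd
  set k := (m + n) / q with hk
  have hjd : j + d ≤ k := by
    have : (m + 1) / q + (n - 1) / q ≤ ((m + 1) + (n - 1)) / q := Nat.add_div_le_add_div _ _ _
    have heq : (m + 1) + (n - 1) = m + n := by omega
    rw [heq] at this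
    exact this
  have hvd : padicValNat p (Nat.factorial n) ≤ d :=
    padicValNat_factorial_le' p n hn
  have hsplit : padicValNat p (Nat.factorial j) + padicValNat p (Nat.factorial d)
      ≤ padicValNat p (Nat.factorial k) := by
    have h1 : Nat.factorial j * Nat.factorial d ∣ Nat.factorial (j + d) :=
      Nat.factorial_mul_factorial_dvd_factorial_add j d
    have h2 : Nat.factorial (j + d) ∣ Nat.factorial k := Nat.factorial_dvd_factorial hjd
    have := padicValNat_le_of_dvd p (Nat.factorial_ne_zero k) (h1.trans h2)
    rwa [padicValNat.mul (Nat.factorial_ne_zero j) (Nat.factorial_ne_zero d)] at this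
  simp only [apFun, ge_iff_le, ← hq, ← hj, ← hk]
  omega
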